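/- There exists δ > 0 such that for every φ ∈ ℝ and every pair of positive reals (u, v) with (u, v, φ) satisfying the system (AE), one has u ≥ δ or v ≥ δ; i.e. u < δ and v < δ cannot hold simultaneously for any solution of (AE). (Proposition 2.5(i): non-simultaneous vanishing of u and v.) -/
import Mathlib


/-- Proposition 2.5(i): non-simultaneous vanishing. There is `δ > 0` such that
no positive solution of (AE) can have both `u < δ` and `v < δ`. -/
theorem stmt_4 (d₁ d₂ θ₁ θ₂ g₁₁ g₁₂ g₂₁ g₂₂ c₁ c₂ : ℝ)
    (hd₁ : 0 < d₁) (hd₂ : 0 < d₂) (hθ₁ : 0 < θ₁) (hθ₂ : θ₂ < 0)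
    (hg₁₁ : 0 < g₁₁) (hg₁₂ : 0 < g₁₂) (hg₂₁ : 0 < g₂₁) (hg₂₂ : 0 < g₂₂) :
    ∃ δ : ℝ, 0 < δ ∧ ∀ φ u v : ℝ, 0 < u → 0 < v →
      d₁ * Real.log u + θ₁ * φ + g₁₁ * u + g₁₂ * v = c₁ →
      d₂ * Real.log v + θ₂ * φ + g₂₁ * u + g₂₂ * v = c₂ →
      δ ≤ u ∨ δ ≤ v := by
  set A : ℝ := -θ₂ * d₁ + θ₁ * d₂ with hA
  set B : ℝ := -θ₂ * (g₁₁ + g₁₂) + θ₁ * (g₂₁ + g₂₂) with hB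
  set C : ℝ := -θ₂ * c₁ + θ₁ * c₂ with hC
  have hθ₂' : 0 < -θ₂ := neg_pos.mpr hθ₂
  have hApos : 0 < A := by rw [hA]; exact add_pos (mul_pos hθ₂' hd₁) (mul_pos hθ₁ hd₂)
  refine ⟨min 1 (Real.exp ((C - B) / A)), lt_min one_pos (Real.exp_pos _), ?_⟩
  intro φ u v hu hv h1 h2
  by_contra hcon
  push_neg at hcon
  obtain ⟨hud, hvd⟩ := hcon
  set δ : ℝ := min 1 (Real.exp ((C - B) / A)) with hδ
  have hδpos : 0 < δ := lt_min one_pos (Real.exp_pos _)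
  have hδ1 : δ ≤ 1 := min_le_left _ _
  have hlogδ : Real.log δ ≤ (C - B) / A := by
    calc Real.log δ ≤ Real.log (Real.exp ((C - B) / A)) :=
          Real.log_le_log hδpos (min_le_right _ _)
      _ = (C - B) / A := Real.log_exp _
  have hAlogδ : A * Real.log δ ≤ C - B := by
    have := mul_le_mul_of_nonneg_left hlogδ hApos.le
    rwa [mul_div_cancel₀ _ hApos.ne'] at this
  have hlu : Real.log u < Real.log δ := Real.log_lt_log hu hud
  have hlv : Real.log v < Real.log δ := Real.log_lt_log hv hvd
  have h1' : -θ₂ * d₁ * Real.log u < -θ₂ * d₁ * Real.log δ := by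
    exact mul_lt_mul_of_pos_left hlu (mul_pos hθ₂' hd₁)
  have h2' : θ₁ * d₂ * Real.log v < θ₁ * d₂ * Real.log δ := by
    exact mul_lt_mul_of_pos_left hlv (mul_pos hθ₁ hd₂)
  have hu1 : u < 1 := lt_of_lt_of_le hud hδ1
  have hv1 : v < 1 := lt_of_lt_of_le hvd hδ1
  have key : -θ₂ * d₁ * Real.log u + θ₁ * d₂ * Real.log v
      + (-θ₂ * g₁₁ + θ₁ * g₂₁) * u + (-θ₂ * g₁₂ + θ₁ * g₂₂) * v = C := by
    rw [hC]; linear_combination (-θ₂) * h1 + θ₁ * h2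
  have hPu : (0:ℝ) < -θ₂ * g₁₁ + θ₁ * g₂₁ := add_pos (mul_pos hθ₂' hg₁₁) (mul_pos hθ₁ hg₂₁)
  have hPv : (0:ℝ) < -θ₂ * g₁₂ + θ₁ * g₂₂ := add_pos (mul_pos hθ₂' hg₁₂) (mul_pos hθ₁ hg₂₂)
  have hBu : (-θ₂ * g₁₁ + θ₁ * g₂₁) * u < -θ₂ * g₁₁ + θ₁ * g₂₁ := by
    nlinarith [mul_pos hPu (sub_pos.mpr hu1)]
  have hBv : (-θ₂ * g₁₂ + θ₁ * g₂₂) * v < -θ₂ * g₁₂ + θ₁ * g₂₂ := by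
    nlinarith [mul_pos hPv (sub_pos.mpr hv1)]
  rw [hA] at hAlogδ
  rw [hB] at hAlogδ
  linarith [hAlogδ, h1', h2', key, hBu, hBv]
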